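/- Let A be an ℓ×n integer matrix, b an integer vector of dimension ℓ, and let Δ ≥ 1 be an upper bound on the absolute values of all subdeterminants of A. If the system A x ≤ b has a solution x ∈ ℚ^n, then it has a rational solution of the form (1/a)·E b, where E is an n×ℓ integer matrix with all entries of absolute value at most Δ, and a is a nonzero integer with |a| ≤ Δ. -/

import Mathlib

open Matrix Submodule Module

lemma exists_enum {V ι : Type*} (v : ι → V) (s : Set ι) (t : Set V)
    (ht : t ⊆ v '' s) (hfin : t.Finite) :
    ∃ (k : ℕ) (f : Fin k → ι), Function.Injective (v ∘ f) ∧ (∀ j, f j ∈ s) ∧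
      Set.range (v ∘ f) = t := by
  classical
  haveI := hfin.fintype
  obtain ⟨k, ⟨e⟩⟩ : ∃ k, Nonempty (t ≃ Fin k) := ⟨_, ⟨Fintype.equivFin t⟩⟩
  choose pre hs hv using fun y : t => ht y.2
  refine ⟨k, fun j => pre (e.symm j), ?_, fun j => hs _, ?_⟩
  · intro j j' h
    have h2 : ((e.symm j : t) : V) = ((e.symm j' : t) : V) := by
      rw [← hv (e.symm j), ← hv (e.symm j')]; exact h
    exact e.symm.injective (Subtype.ext h2)
  · ext y
    constructor
    · rintro ⟨j, rfl⟩
      simp only [Function.comp_apply, hv]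
      exact (e.symm j).2
    · intro hy
      exact ⟨e ⟨y, hy⟩, by simp [hv]⟩

/-- All absolute values of subdeterminants of `A` are bounded by `Δ`. -/
def SubdetBound {ℓ n : ℕ} (A : Matrix (Fin ℓ) (Fin n) ℤ) (Δ : ℤ) : Prop :=
  ∀ (k : ℕ) (f : Fin k → Fin ℓ) (g : Fin k → Fin n),
    Function.Injective f → Function.Injective g →
      |(A.submatrix f g).det| ≤ Δ

lemma abs_adjugate_le {ℓ n : ℕ} (A : Matrix (Fin ℓ) (Fin n) ℤ) (Δ : ℤ)
    (hsub : SubdetBound A Δ) {k : ℕ} {f : Fin k → Fin ℓ} {g : Fin k → Fin n}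
    (hf : Function.Injective f) (hg : Function.Injective g) (p q : Fin k) :
    |(A.submatrix f g).adjugate p q| ≤ Δ := by
  match k, f, g, p, q with
  | (m+1), f, g, p, q =>
  set N := A.submatrix f g with hN
  set σr := Equiv.swap (0 : Fin (m+1)) q with hσr
  set σc := Equiv.swap (0 : Fin (m+1)) p with hσc
  set X := N.updateRow q (Pi.single p 1) with hX
  set M := X.submatrix σr σc with hM
  have habs : |X.det| = |M.det| := by
    have h1 : M = (X.submatrix σr id).submatrix id σc := rfl
    rw [h1, det_permute', det_permute]
    rcases Int.units_eq_one_or (Equiv.Perm.sign σr) with h | h <;>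
      rcases Int.units_eq_one_or (Equiv.Perm.sign σc) with h' | h' <;>
        simp [h, h', abs_neg]
  have hrow0 : ∀ j' : Fin (m+1), M 0 j' = if j' = 0 then 1 else 0 := by
    intro j'
    have h0 : M 0 j' = (Pi.single p 1 : Fin (m+1) → ℤ) (σc j') := by
      simp [hM, hX, submatrix_apply, hσr, Equiv.swap_apply_left]
    rw [h0]
    by_cases hj : j' = 0
    · subst hj
      rw [if_pos rfl, hσc, Equiv.swap_apply_left, Pi.single_eq_same]
    · rw [Pi.single_apply, if_neg, if_neg hj]
      intro hcontra
      apply hj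
      have : σc j' = σc 0 := by rw [hcontra, hσc, Equiv.swap_apply_left]
      exact σc.injective this
  have hdetM : M.det = (M.submatrix Fin.succ Fin.succ).det := by
    rw [det_succ_row_zero, Finset.sum_eq_single 0]
    · simp [hrow0]
    · intro j' _ hj'; simp [hrow0, hj']
    · simp
  have hrne : ∀ i : Fin m, σr i.succ ≠ q := by
    intro i hcontra
    have : σr i.succ = σr 0 := by rw [hcontra, hσr, Equiv.swap_apply_left]
    exact (Fin.succ_ne_zero i) (σr.injective this)
  have hminor : M.submatrix Fin.succ Fin.succ =
      A.submatrix (f ∘ σr ∘ Fin.succ) (g ∘ σc ∘ Fin.succ) := by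
    ext i j
    simp only [submatrix_apply, Function.comp_apply, hM, hX]
    rw [Matrix.updateRow_ne (hrne i)]
    rfl
  have hadj : (A.submatrix f g).adjugate p q = X.det := by
    rw [Matrix.adjugate_apply]
  rw [hadj, habs, hdetM, hminor]
  exact hsub m _ _ (hf.comp (σr.injective.comp (Fin.succ_injective m)))
    (hg.comp (σc.injective.comp (Fin.succ_injective m)))

section Main

variable {ℓ n : ℕ}

-- Step 2: maximal tight set has rows spanning everything
lemma rows_span (B : Matrix (Fin ℓ) (Fin n) ℚ) (b' : Fin ℓ → ℚ)
    (x : Fin n → ℚ) (hx : B.mulVec x ≤ b')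
    (hmax : ∀ y, B.mulVec y ≤ b' →
      (Finset.univ.filter (fun j => B.mulVec y j = b' j)).card ≤
      (Finset.univ.filter (fun j => B.mulVec x j = b' j)).card)
    (m0 : Fin ℓ) :
    (B m0) ∈ span ℚ ((fun m => B m) ''
      ↑(Finset.univ.filter (fun j => B.mulVec x j = b' j))) := by
  classical
  set v : Fin ℓ → (Fin n → ℚ) := fun m => B m with hv
  set I := Finset.univ.filter (fun j => B.mulVec x j = b' j) with hI
  by_contra hm
  set W : Submodule ℚ (Fin n → ℚ) := span ℚ (v '' ↑I) with hW
  have hq : W.mkQ (v m0) ≠ 0 := by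
    simpa [Submodule.Quotient.mk_eq_zero] using hm
  obtain ⟨ψ, hψ⟩ : ∃ ψ : Module.Dual ℚ ((Fin n → ℚ) ⧸ W), ψ (W.mkQ (v m0)) ≠ 0 := by
    by_contra h
    push_neg at h
    exact hq ((Module.forall_dual_apply_eq_zero_iff ℚ _).mp h)
  set f0 : (Fin n → ℚ) →ₗ[ℚ] ℚ := ψ.comp W.mkQ with hf0
  have hf0W : ∀ w ∈ W, f0 w = 0 := by
    intro w hw
    have : W.mkQ w = 0 := (Submodule.Quotient.mk_eq_zero W).mpr hw
    simp [hf0, this]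
  obtain ⟨g0, hg0W, hg0m⟩ : ∃ g0 : (Fin n → ℚ) →ₗ[ℚ] ℚ,
      (∀ w ∈ W, g0 w = 0) ∧ 0 < g0 (v m0) := by
    rcases hψ.lt_or_gt with h | h
    · exact ⟨-f0, fun w hw => by simp [hf0W w hw], by simpa [hf0] using h⟩
    · exact ⟨f0, hf0W, h⟩
  set d : Fin n → ℚ := fun i => g0 (Pi.single i 1) with hd
  have hBd : ∀ m1, (B.mulVec d) m1 = g0 (v m1) := by
    intro m1
    have hrep : v m1 = ∑ i, (B m1 i) • (Pi.single i 1 : Fin n → ℚ) := by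
      funext j
      rw [Finset.sum_apply]
      simp [Pi.single_apply, hv]
    conv_rhs => rw [hrep]
    rw [map_sum]
    simp only [_root_.map_smul, smul_eq_mul]
    rfl
  have hg0I : ∀ j ∈ I, g0 (v j) = 0 := by
    intro j hj
    exact hg0W _ (subset_span ⟨j, hj, rfl⟩)
  -- the set of rows with positive derivative
  set P : Finset (Fin ℓ) := Finset.univ.filter (fun m1 => 0 < (B.mulVec d) m1) with hP
  have hm0P : m0 ∈ P := by
    simp only [hP, Finset.mem_filter, Finset.mem_univ, true_and]
    rw [hBd]; exact hg0m
  set ratio : Fin ℓ → ℚ := fun m1 => (b' m1 - B.mulVec x m1) / (B.mulVec d) m1 with hratio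
  set T : Finset ℚ := P.image ratio with hT
  have hTne : T.Nonempty := ⟨ratio m0, Finset.mem_image.mpr ⟨m0, hm0P, rfl⟩⟩
  set t : ℚ := T.min' hTne with ht
  have ht0 : 0 ≤ t := by
    apply Finset.le_min'
    intro y hy
    obtain ⟨m1, hm1, rfl⟩ := Finset.mem_image.mp hy
    have hpos : 0 < (B.mulVec d) m1 := (Finset.mem_filter.mp hm1).2
    exact div_nonneg (by linarith [hx m1]) hpos.le
  obtain ⟨m2, hm2P, hm2⟩ : ∃ m2 ∈ P, ratio m2 = t := by
    have h := Finset.mem_image.mp (T.min'_mem hTne)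
    obtain ⟨m2, hm2P, hm2⟩ := h
    exact ⟨m2, hm2P, hm2⟩
  set x' : Fin n → ℚ := x + t • d with hx'
  have hBx' : ∀ m1, B.mulVec x' m1 = B.mulVec x m1 + t * (B.mulVec d) m1 := by
    intro m1
    rw [hx', mulVec_add, mulVec_smul]
    simp
  have hfeas' : B.mulVec x' ≤ b' := by
    intro m1
    rw [hBx']
    by_cases hpos : 0 < (B.mulVec d) m1
    · have hmem : ratio m1 ∈ T := Finset.mem_image.mpr
        ⟨m1, Finset.mem_filter.mpr ⟨Finset.mem_univ _, hpos⟩, rfl⟩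
      have := T.min'_le _ hmem
      rw [← ht] at this
      have h2 : t * (B.mulVec d) m1 ≤ ratio m1 * (B.mulVec d) m1 :=
        mul_le_mul_of_nonneg_right this hpos.le
      rw [hratio] at h2
      rw [div_mul_cancel₀ _ hpos.ne'] at h2
      linarith
    · push_neg at hpos
      have : t * (B.mulVec d) m1 ≤ 0 := mul_nonpos_of_nonneg_of_nonpos ht0 hpos
      linarith [hx m1]
  have hsubset : I ⊆ Finset.univ.filter (fun j => B.mulVec x' j = b' j) := by
    intro j hj
    simp only [Finset.mem_filter, Finset.mem_univ, true_and]
    have h1 : B.mulVec x j = b' j := (Finset.mem_filter.mp hj).2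
    have h2 : (B.mulVec d) j = 0 := by rw [hBd]; exact hg0I j hj
    rw [hBx', h1, h2, mul_zero, add_zero]
  have hm2new : m2 ∈ Finset.univ.filter (fun j => B.mulVec x' j = b' j) ∧ m2 ∉ I := by
    have hpos : 0 < (B.mulVec d) m2 := (Finset.mem_filter.mp hm2P).2
    constructor
    · simp only [Finset.mem_filter, Finset.mem_univ, true_and]
      rw [hBx', ← hm2, hratio, div_mul_cancel₀ _ hpos.ne']
      ring
    · intro hmem
      have := hg0I m2 hmem
      rw [← hBd] at this
      exact hpos.ne' this
  have hcard : I.card < (Finset.univ.filter (fun j => B.mulVec x' j = b' j)).card :=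
    Finset.card_lt_card (Finset.ssubset_iff_of_subset hsubset |>.mpr ⟨m2, hm2new.1, hm2new.2⟩)
  exact absurd (hmax x' hfeas') (by omega)

end Main

theorem solution_rational_affine_transformation {ℓ n : ℕ}
    (A : Matrix (Fin ℓ) (Fin n) ℤ) (b : Fin ℓ → ℤ) (Δ : ℤ)
    (hΔ : 1 ≤ Δ) (hsub : SubdetBound A Δ)
    (hsol : ∃ x : Fin n → ℚ,
      (A.map (fun a => (a : ℚ))).mulVec x ≤ fun j => (b j : ℚ)) :
    ∃ (E : Matrix (Fin n) (Fin ℓ) ℤ) (a : ℤ),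
      a ≠ 0 ∧ |a| ≤ Δ ∧ (∀ i j, |E i j| ≤ Δ) ∧
      (A.map (fun a => (a : ℚ))).mulVec
        (fun i => (1 / (a : ℚ)) * ((E.mulVec b) i : ℚ)) ≤ fun j => (b j : ℚ) := by
  classical
  obtain ⟨x0, hx0⟩ := hsol
  set B : Matrix (Fin ℓ) (Fin n) ℚ := A.map (fun a => (a : ℚ)) with hB
  set b' : Fin ℓ → ℚ := fun j => (b j : ℚ) with hb'
  set v : Fin ℓ → (Fin n → ℚ) := fun m => B m with hv
  set tset : (Fin n → ℚ) → Finset (Fin ℓ) :=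
    fun y => Finset.univ.filter (fun j => B.mulVec y j = b' j) with htset
  -- choose x maximizing the tight set cardinality
  set C : Finset ℕ :=
    (Finset.range (ℓ+1)).filter (fun c => ∃ y, B.mulVec y ≤ b' ∧ (tset y).card = c) with hC
  have hmemC : ∀ y, B.mulVec y ≤ b' → (tset y).card ∈ C := by
    intro y hy
    simp only [hC, Finset.mem_filter, Finset.mem_range]
    refine ⟨Nat.lt_succ_of_le (le_trans (Finset.card_le_univ _) (by simp)), y, hy, rfl⟩
  have hCne : C.Nonempty := ⟨_, hmemC x0 hx0⟩
  obtain ⟨x, hx, hxcard⟩ : ∃ y, B.mulVec y ≤ b' ∧ (tset y).card = C.max' hCne := by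
    exact (Finset.mem_filter.mp (C.max'_mem hCne)).2
  have hmax : ∀ y, B.mulVec y ≤ b' → (tset y).card ≤ (tset x).card := by
    intro y hy
    rw [hxcard]
    exact C.le_max' _ (hmemC y hy)
  set I := tset x with hI
  have hrowspan : ∀ m0, v m0 ∈ span ℚ (v '' ↑I) :=
    fun m0 => rows_span B b' x hx hmax m0
  -- extract linearly independent rows
  obtain ⟨brows, hbsub, hbspan, hbli⟩ := exists_linearIndependent ℚ (v '' ↑I)
  have hbfin : brows.Finite := ((I.finite_toSet).image v).subset hbsub
  obtain ⟨k, f, hvf_inj, hfI, hvf_range⟩ := exists_enum v ↑I brows hbsub hbfin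
  have hf_inj : Function.Injective f := Function.Injective.of_comp hvf_inj
  have hli : LinearIndependent ℚ (v ∘ f) := by
    rw [← linearIndepOn_id_range_iff hvf_inj, hvf_range]
    exact hbli
  have hrowspan' : ∀ m0, v m0 ∈ span ℚ (Set.range (v ∘ f)) := by
    intro m0
    rw [hvf_range, hbspan]
    exact hrowspan m0
  -- the k×n matrix of chosen rows; its columns span ℚ^k
  set R : Matrix (Fin k) (Fin n) ℚ := B.submatrix f id with hR
  have hRrows : LinearIndependent ℚ (fun p => R p) := hli
  have hrank : span ℚ (Set.range Rᵀ) = ⊤ := by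
    rw [show Set.range Rᵀ = Set.range R.col from rfl, ← Matrix.range_mulVecLin]
    apply Submodule.eq_top_of_finrank_eq
    have h1 : R.rank = k := by
      rw [Matrix.rank_eq_finrank_span_row]
      have : Set.range R.row = Set.range (v ∘ f) := rfl
      rw [this, finrank_span_eq_card hli]
      simp
    rw [show finrank ℚ ↥(LinearMap.range R.mulVecLin) = R.rank from rfl, h1,
      Module.finrank_fintype_fun_eq_card, Fintype.card_fin]
  -- extract linearly independent columns
  obtain ⟨bcols, hcsub, hcspan, hcli⟩ := exists_linearIndependent ℚ (Set.range Rᵀ)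
  have hcfin : bcols.Finite := (Set.finite_range Rᵀ).subset hcsub
  obtain ⟨k', g, hvg_inj, -, hvg_range⟩ :=
    exists_enum Rᵀ Set.univ bcols (fun y hy => by obtain ⟨i, hi⟩ := hcsub hy; exact ⟨i, trivial, hi⟩) hcfin
  have hg_inj : Function.Injective g := Function.Injective.of_comp hvg_inj
  have hgli : LinearIndependent ℚ (Rᵀ ∘ g) := by
    rw [← linearIndepOn_id_range_iff hvg_inj, hvg_range]
    exact hcli
  have hgspan : span ℚ (Set.range (Rᵀ ∘ g)) = ⊤ := by
    rw [hvg_range,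
      hcspan, hrank]
  have hkk : k' = k := by
    let bb : Basis (Fin k') ℚ (Fin k → ℚ) := Basis.mk hgli (by rw [hgspan])
    have h := Module.finrank_eq_card_basis bb
    rw [Module.finrank_fintype_fun_eq_card, Fintype.card_fin, Fintype.card_fin] at h
    omega
  subst hkk
  -- the invertible square submatrix
  set S : Matrix (Fin k') (Fin k') ℚ := B.submatrix f g with hS
  have hScols : LinearIndependent ℚ (fun j => Sᵀ j) := hgli
  have hSunit : IsUnit S := Matrix.linearIndependent_cols_iff_isUnit.mp hScols
  have hSdet : S.det ≠ 0 := by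
    intro h
    rw [Matrix.isUnit_iff_isUnit_det, h] at hSunit
    simpa using hSunit
  set a : ℤ := (A.submatrix f g).det with ha
  have hcast : ((A.submatrix f g).map (fun z => (z:ℚ))) = S := by
    ext i j
    simp [hS, hB]
  have haS : (a : ℚ) = S.det := by
    rw [← hcast, ha]
    exact RingHom.map_det (Int.castRingHom ℚ) (A.submatrix f g)
  have ha0 : a ≠ 0 := by
    intro h
    apply hSdet
    rw [← haS, h, Int.cast_zero]
  have haΔ : |a| ≤ Δ := hsub k' f g hf_inj hg_inj
  -- the matrix E
  set adjZ : Matrix (Fin k') (Fin k') ℤ := (A.submatrix f g).adjugate with hadjZ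
  set E : Matrix (Fin n) (Fin ℓ) ℤ := Matrix.of (fun i j =>
    ∑ p : Fin k', ∑ q : Fin k', if g p = i ∧ f q = j then adjZ p q else 0) with hE
  have hEg : ∀ (p : Fin k') (j : Fin ℓ),
      E (g p) j = ∑ q : Fin k', if f q = j then adjZ p q else 0 := by
    intro p j
    rw [show E (g p) j = ∑ p' : Fin k', ∑ q : Fin k',
        if g p' = g p ∧ f q = j then adjZ p' q else 0 from rfl]
    rw [Finset.sum_eq_single p]
    · exact Finset.sum_congr rfl (fun q _ => by simp)
    · intro p' _ hp'
      apply Finset.sum_eq_zero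
      intro q _
      rw [if_neg]
      rintro ⟨h1, -⟩
      exact hp' (hg_inj h1)
    · simp
  have hE0 : ∀ i, (∀ p, g p ≠ i) → ∀ j, E i j = 0 := by
    intro i hi j
    rw [show E i j = ∑ p : Fin k', ∑ q : Fin k',
        if g p = i ∧ f q = j then adjZ p q else 0 from rfl]
    apply Finset.sum_eq_zero
    intro p _
    apply Finset.sum_eq_zero
    intro q _
    rw [if_neg]
    rintro ⟨h1, -⟩
    exact hi p h1
  have hEbound : ∀ i j, |E i j| ≤ Δ := by
    intro i j
    by_cases hi : ∃ p, g p = i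
    · obtain ⟨p, rfl⟩ := hi
      rw [hEg]
      by_cases hj : ∃ q, f q = j
      · obtain ⟨q, rfl⟩ := hj
        rw [Finset.sum_eq_single q]
        · rw [if_pos rfl]
          exact abs_adjugate_le A Δ hsub hf_inj hg_inj p q
        · intro q' _ hq'
          rw [if_neg (fun h => hq' (hf_inj h))]
        · simp
      · push_neg at hj
        rw [Finset.sum_eq_zero (fun q _ => if_neg (hj q))]
        simpa using le_trans zero_le_one hΔ
    · push_neg at hi
      rw [hE0 i hi j]
      simpa using le_trans zero_le_one hΔ
  -- candidate solution vector
  set vq : Fin n → ℚ := fun i => (1 / (a : ℚ)) * ((E.mulVec b) i : ℚ) with hvq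
  have hkey : ∀ p : Fin k', (E.mulVec b) (g p) = ∑ q : Fin k', adjZ p q * b (f q) := by
    intro p
    rw [show (E.mulVec b) (g p) = ∑ j, E (g p) j * b j from rfl]
    simp_rw [hEg, Finset.sum_mul]
    rw [Finset.sum_comm]
    apply Finset.sum_congr rfl
    intro q _
    rw [Finset.sum_eq_single (f q)]
    · rw [if_pos rfl]
    · intro j _ hj
      rw [if_neg fun h => hj h.symm, zero_mul]
    · simp
  have hvq0 : ∀ i, (∀ p : Fin k', g p ≠ i) → vq i = 0 := by
    intro i hi
    have h0 : (E.mulVec b) i = 0 := by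
      rw [show (E.mulVec b) i = ∑ j, E i j * b j from rfl]
      exact Finset.sum_eq_zero fun j _ => by rw [hE0 i hi j, zero_mul]
    rw [hvq]
    simp [h0]
  have hadjcast : S.adjugate = adjZ.map (fun z => (z:ℚ)) := by
    rw [hadjZ, ← hcast]
    exact ((Int.castRingHom ℚ).map_adjugate (A.submatrix f g)).symm
  set bI : Fin k' → ℚ := fun q' => b' (f q') with hbI
  have hw : (fun p => vq (g p)) = (S.det)⁻¹ • (S.adjugate.mulVec bI) := by
    funext p
    show (1 / (a:ℚ)) * ((E.mulVec b) (g p) : ℚ) = _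
    rw [hkey p, Pi.smul_apply, smul_eq_mul,
      show S.adjugate.mulVec bI p = ∑ q', S.adjugate p q' * bI q' from rfl, hadjcast]
    rw [haS] at *
    push_cast
    rw [one_div]
    congr 1
  have hSw : S.mulVec (fun p => vq (g p)) = bI := by
    rw [hw, mulVec_smul, mulVec_mulVec, Matrix.mul_adjugate, smul_mulVec, one_mulVec,
      smul_smul, inv_mul_cancel₀ hSdet, one_smul]
  have hrowval : ∀ q' : Fin k', (B.mulVec vq) (f q') = b' (f q') := by
    intro q'
    have hzero : ∀ i ∈ Finset.univ, i ∉ Finset.univ.image g → B (f q') i * vq i = 0 := by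
      intro i _ hi
      have hne : ∀ p : Fin k', g p ≠ i :=
        fun p hp => hi (Finset.mem_image.mpr ⟨p, Finset.mem_univ p, hp⟩)
      rw [hvq0 i hne, mul_zero]
    have h1 : (B.mulVec vq) (f q') = ∑ i ∈ Finset.univ.image g, B (f q') i * vq i := by
      rw [show (B.mulVec vq) (f q') = ∑ i, B (f q') i * vq i from rfl]
      exact (Finset.sum_subset (Finset.subset_univ _) hzero).symm
    rw [h1, Finset.sum_image (fun p _ p' _ h => hg_inj h)]
    have h2 := congrFun hSw q'
    rw [show S.mulVec (fun p => vq (g p)) q' = ∑ p, S q' p * vq (g p) from rfl] at h2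
    exact h2
  have hdot : ∀ (y : Fin n → ℚ) (m0 : Fin ℓ) (c : Fin k' → ℚ),
      (∑ q', c q' • v (f q')) = v m0 →
      (B.mulVec y) m0 = ∑ q', c q' * (B.mulVec y) (f q') := by
    intro y m0 c hc
    rw [show (B.mulVec y) m0 = ∑ i, v m0 i * y i from rfl, ← hc]
    simp only [Finset.sum_apply, Pi.smul_apply, smul_eq_mul, Finset.sum_mul]
    rw [Finset.sum_comm]
    apply Finset.sum_congr rfl
    intro q' _
    rw [show (B.mulVec y) (f q') = ∑ i, v (f q') i * y i from rfl, Finset.mul_sum]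
    apply Finset.sum_congr rfl
    intro i _
    ring
  refine ⟨E, a, ha0, haΔ, hEbound, ?_⟩
  intro m0
  obtain ⟨c, hc⟩ := (mem_span_range_iff_exists_fun ℚ).mp (hrowspan' m0)
  have e1 := hdot vq m0 c hc
  have e2 := hdot x m0 c hc
  have etight : ∀ q' : Fin k', (B.mulVec x) (f q') = b' (f q') :=
    fun q' => (Finset.mem_filter.mp (hfI q')).2
  have heq : (B.mulVec vq) m0 = (B.mulVec x) m0 := by
    rw [e1, e2]
    apply Finset.sum_congr rfl
    intro q' _
    rw [hrowval q', etight q']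
  show (B.mulVec vq) m0 ≤ b' m0
  rw [heq]
  exact hx m0
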